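/- In the symmetric group algebra ℚ[S_n], for the Jucys-Murphy elements X_i = Σ_{j<i} (j i), the elementary symmetric polynomial satisfies e_ℓ(X_1,…,X_n) = Σ_{σ ∈ S_n, κ(σ)=n−ℓ} σ, where κ(σ) is the number of cycles of σ including fixed points. -/

import Mathlib

open Equiv Equiv.Perm Finset

variable {α : Type*} [Fintype α] [DecidableEq α]

/-- reflection length -/
def plen (σ : Perm α) : ℕ := σ.support.card - (Multiset.card σ.cycleType)

lemma two_card_cycleType_le (σ : Perm α) :
    2 * Multiset.card σ.cycleType ≤ σ.support.card := by
  rw [← sum_cycleType, mul_comm, ← smul_eq_mul]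
  exact Multiset.card_nsmul_le_sum (fun x hx => two_le_of_mem_cycleType hx)

lemma card_cycleType_le (σ : Perm α) : Multiset.card σ.cycleType ≤ σ.support.card :=
  le_trans (by omega) (two_card_cycleType_le σ)

lemma plen_eq_zero_iff {σ : Perm α} : plen σ = 0 ↔ σ = 1 := by
  constructor
  · intro h
    by_contra h1
    have h2 := two_card_cycleType_le σ
    have h3 : 0 < Multiset.card σ.cycleType := card_cycleType_pos.mpr h1
    unfold plen at h
    omega
  · rintro rfl; simp [plen]

lemma support_mul_swap {σ : Perm α} {j m : α} (hm : σ m = m) (hjm : j ≠ m) :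
    (σ * Equiv.swap j m).support = σ.support ∪ {j, m} := by
  have hσj : σ j ≠ m := fun h => hjm (σ.injective (h.trans hm.symm))
  ext x
  simp only [Perm.mem_support, Perm.mul_apply, Finset.mem_union, Finset.mem_insert,
    Finset.mem_singleton]
  rcases eq_or_ne x j with rfl | hxj
  · simp [Equiv.swap_apply_left, hm, hjm.symm]
  rcases eq_or_ne x m with rfl | hxm
  · simp [Equiv.swap_apply_right, hσj]
  · rw [Equiv.swap_apply_of_ne_of_ne hxj hxm]
    simp [hxj, hxm]

lemma isCycle_mul_swap {c : Perm α} {j m : α} (hc : c.IsCycle) (hj : c j ≠ j)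
    (hm : c m = m) (hjm : j ≠ m) : (c * Equiv.swap j m).IsCycle := by
  set g := c * Equiv.swap j m with hg
  have hmsupp : m ∉ c.support := by simp [Perm.mem_support, hm]
  have hgm : g m = c j := by simp [hg, Perm.mul_apply, Equiv.swap_apply_right]
  have hcj : c j ≠ m := fun h => hjm (c.injective (h.trans hm.symm))
  have hgmm : g m ≠ m := by rw [hgm]; exact hcj
  -- key claim : for all k, SameCycle g m ((c ^ k) j)
  have key : ∀ k : ℕ, g.SameCycle m ((c ^ k) j) := by
    intro k
    induction k with
    | zero =>
      simp only [pow_zero, Perm.coe_one, id_eq]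
      have : g j = m := by simp [hg, Perm.mul_apply, Equiv.swap_apply_left, hm]
      exact Equiv.Perm.SameCycle.symm ⟨1, by simpa using this⟩
    | succ k ih =>
      rcases eq_or_ne ((c ^ k) j) j with h | h
      · rw [pow_succ', Perm.mul_apply, h]
        rw [← hgm]
        exact ⟨1, by simp⟩
      · have hne : (c ^ k) j ∈ c.support := pow_apply_mem_support.mpr (Perm.mem_support.mpr hj)
        have hnm : (c ^ k) j ≠ m := fun hh => hmsupp (hh ▸ hne)
        have : g ((c ^ k) j) = (c ^ (k+1)) j := by
          rw [hg, Perm.mul_apply, Equiv.swap_apply_of_ne_of_ne h hnm, pow_succ', Perm.mul_apply]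
        exact ih.trans ⟨1, by simpa using this⟩
  refine ⟨m, hgmm, fun y hy => ?_⟩
  have hysupp : y ∈ g.support := Perm.mem_support.mpr hy
  rw [hg, support_mul_swap hm hjm] at hysupp
  rcases Finset.mem_union.mp hysupp with h | h
  · obtain ⟨i, _, _, hi⟩ := Equiv.Perm.SameCycle.exists_pow_eq c
      (hc.sameCycle hj (Perm.mem_support.mp h))
    exact (hi ▸ key i)
  · simp only [Finset.mem_insert, Finset.mem_singleton] at h
    rcases h with rfl | h
    · simpa using key 0
    · rw [h]

lemma plen_mul_swap {σ : Perm α} {j m : α} (hm : σ m = m) (hjm : j ≠ m) :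
    plen (σ * Equiv.swap j m) = plen σ + 1 := by
  have hmsupp : m ∉ σ.support := by simp [Perm.mem_support, hm]
  have hsupp := support_mul_swap hm hjm
  have hct : Multiset.card (σ * Equiv.swap j m).cycleType
      = Multiset.card σ.cycleType + (if σ j = j then 1 else 0) ∧
      (σ * Equiv.swap j m).support.card
      = σ.support.card + (if σ j = j then 2 else 1) := by
    by_cases hj : σ j = j
    · -- disjoint case
      have hd : Perm.Disjoint σ (Equiv.swap j m) := by
        intro x
        rcases eq_or_ne x j with rfl | hxj
        · exact Or.inl hj
        rcases eq_or_ne x m with rfl | hxm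
        · exact Or.inl hm
        · exact Or.inr (Equiv.swap_apply_of_ne_of_ne hxj hxm)
      have hcyc : (Equiv.swap j m).cycleType = {2} := by
        rw [(Equiv.Perm.isCycle_swap hjm).cycleType, Equiv.Perm.support_swap hjm]
        simp [Finset.card_insert_of_notMem, hjm]
      have hjsupp : j ∉ σ.support := by simp [Perm.mem_support, hj]
      constructor
      · rw [hd.cycleType_mul, hcyc]; simp [hj]
      · rw [hsupp, if_pos hj]
        rw [Finset.card_union_of_disjoint (by
          simp only [Finset.disjoint_insert_right, Finset.disjoint_singleton_right]
          exact ⟨hjsupp, hmsupp⟩)]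
        simp [Finset.card_insert_of_notMem, hjm]
    · -- cycle merge case
      have hmem : σ.cycleOf j ∈ σ.cycleFactorsFinset :=
        cycleOf_mem_cycleFactorsFinset_iff.mpr (Perm.mem_support.mpr hj)
      set c := σ.cycleOf j with hcdef
      set d := σ * c⁻¹ with hddef
      have hdc : Perm.Disjoint d c := disjoint_mul_inv_of_mem_cycleFactorsFinset hmem
      have hσdc : σ = d * c := by rw [hddef]; group
      have hcc : c.IsCycle := isCycle_cycleOf σ hj
      have hcj : c j ≠ j := by rw [hcdef, cycleOf_apply_self]; exact hj
      have hcm : c m = m := by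
        have : m ∉ c.support := fun h => hmsupp (support_cycleOf_le σ j h)
        exact Equiv.Perm.notMem_support.mp this
      have hg : (c * Equiv.swap j m).IsCycle := isCycle_mul_swap hcc hcj hcm hjm
      have hcinvm : c⁻¹ m = m := by
        conv_lhs => rw [← hcm]
        exact Equiv.symm_apply_apply c m
      have hdm : d m = m := by
        rw [hddef, Perm.mul_apply, hcinvm, hm]
      have hdg : Perm.Disjoint d (c * Equiv.swap j m) := by
        intro x
        rcases hdc x with h | h
        · exact Or.inl h
        · rcases eq_or_ne x m with rfl | hxm
          · exact Or.inl hdm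
          · have hxj : x ≠ j := fun hh => hcj (hh ▸ h)
            exact Or.inr (by rw [Perm.mul_apply, Equiv.swap_apply_of_ne_of_ne hxj hxm, h])
      have heq : σ * Equiv.swap j m = d * (c * Equiv.swap j m) := by
        rw [hσdc]; group
      constructor
      · have hL : Multiset.card (σ * Equiv.swap j m).cycleType
            = Multiset.card d.cycleType + 1 := by
          rw [heq, hdg.cycleType_mul, Multiset.card_add, card_cycleType_eq_one.mpr hg]
        have hR : Multiset.card σ.cycleType = Multiset.card d.cycleType + 1 := by
          rw [hσdc, hdc.cycleType_mul, Multiset.card_add, card_cycleType_eq_one.mpr hcc]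
        rw [hL, hR, if_neg hj]
      · rw [hsupp, if_neg hj]
        have hjsupp : j ∈ σ.support := Perm.mem_support.mpr hj
        have : σ.support ∪ {j, m} = insert m σ.support := by
          ext x
          simp only [Finset.mem_union, Finset.mem_insert, Finset.mem_singleton]
          constructor
          · rintro (h | rfl | rfl)
            · exact Or.inr h
            · exact Or.inr hjsupp
            · exact Or.inl rfl
          · rintro (rfl | h)
            · exact Or.inr (Or.inr rfl)
            · exact Or.inl h
        rw [this, Finset.card_insert_of_notMem hmsupp, add_comm]
  obtain ⟨h1, h2⟩ := hct
  have h3 := card_cycleType_le σ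
  unfold plen
  rw [h1, h2]
  by_cases hj : σ j = j <;> simp [hj] <;> omega


section FinPart
/-- The group algebra `ℚ[S_n]`, with `S_n` realized as permutations of `Fin n`. -/
abbrev QSn (n : ℕ) : Type := MonoidAlgebra ℚ (Equiv.Perm (Fin n))

/-- The Jucys-Murphy element `X_i = Σ_{j<i} (j i)`. -/
noncomputable def JM (n : ℕ) (i : Fin n) : QSn n :=
  ∑ j ∈ Finset.univ.filter (· < i), MonoidAlgebra.of ℚ (Equiv.Perm (Fin n)) (Equiv.swap j i)

/-- Elementary symmetric polynomial in the Jucys-Murphy elements, the products being taken in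
increasing order of the indices (unambiguous, since the `X_i` commute). -/
noncomputable def eJM (n ℓ : ℕ) : QSn n :=
  ∑ s ∈ Finset.univ.powersetCard ℓ, ((s.sort (· ≤ ·)).map (JM n)).prod

/-- number of cycles of `σ`, including fixed points -/
def kappa {n : ℕ} (σ : Equiv.Perm (Fin n)) : ℕ :=
  σ.cycleType.card + (Finset.univ.filter fun x => σ x = x).card

variable {n : ℕ}

def Fm (n m : ℕ) : Finset (Fin n) := Finset.univ.filter (fun i => (i : ℕ) < m)

lemma mem_Fm {m : ℕ} {j : Fin n} : j ∈ Fm n m ↔ (j : ℕ) < m := by simp [Fm]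

lemma Fm_succ {m : ℕ} (hm : m < n) : Fm n (m+1) = insert ⟨m, hm⟩ (Fm n m) := by
  ext j
  simp only [mem_Fm, Finset.mem_insert, Fin.ext_iff]
  omega

lemma mi_not_mem_Fm {m : ℕ} (hm : m < n) : (⟨m, hm⟩ : Fin n) ∉ Fm n m := by simp [mem_Fm]

lemma Fm_self : Fm n n = Finset.univ := by
  ext j; simp [mem_Fm, j.isLt]

lemma lt_mi_of_mem_Fm {m : ℕ} (hm : m < n) {j : Fin n} (hj : j ∈ Fm n m) :
    j < (⟨m, hm⟩ : Fin n) := by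
  rw [mem_Fm] at hj; exact hj

lemma sort_insert_max {s : Finset (Fin n)} {a : Fin n} (ha : ∀ b ∈ s, b ≤ a) (has : a ∉ s) :
    (insert a s).sort (· ≤ ·) = s.sort (· ≤ ·) ++ [a] := by
  apply List.Perm.eq_of_pairwise' (Finset.pairwise_sort _ _) ?_ ?_
  · rw [List.pairwise_append]
    refine ⟨Finset.pairwise_sort _ _, List.pairwise_singleton _ _, ?_⟩
    intro b hb c hc
    rw [List.mem_singleton] at hc
    subst hc
    exact ha b ((Finset.mem_sort _).mp hb)
  · rw [← Multiset.coe_eq_coe]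
    have h1 : ((insert a s).sort (· ≤ ·) : Multiset (Fin n)) = (insert a s).val :=
      Finset.sort_eq _ _
    have h2 : ((s.sort (· ≤ ·) ++ [a] : List (Fin n)) : Multiset (Fin n))
        = s.val + {a} := by
      rw [← Multiset.coe_add, Finset.sort_eq]
      rfl
    rw [h1, h2, Finset.insert_val, Multiset.ndinsert_of_notMem has, add_comm,
      Multiset.singleton_add]
end FinPart

section Main
variable {n : ℕ}

local notation "of'" => MonoidAlgebra.of ℚ (Equiv.Perm (Fin n))

lemma sum_plen_zero (M : Finset (Fin n)) :
    (∑ σ : Equiv.Perm (Fin n), if σ.support ⊆ M ∧ plen σ = 0 then of' σ else 0) = 1 := by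
  rw [Finset.sum_eq_single (1 : Equiv.Perm (Fin n))]
  · simp [plen_eq_zero_iff, MonoidAlgebra.one_def]
  · intro σ _ hσ
    rw [if_neg]
    rintro ⟨-, h2⟩
    exact hσ (plen_eq_zero_iff.mp h2)
  · simp

lemma main_induction : ∀ m, m ≤ n → ∀ ℓ : ℕ,
    (∑ s ∈ (Fm n m).powersetCard ℓ, ((s.sort (· ≤ ·)).map (JM n)).prod)
      = ∑ σ : Equiv.Perm (Fin n),
        if σ.support ⊆ Fm n m ∧ plen σ = ℓ then of' σ else 0 := by
  intro m
  induction m with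
  | zero =>
    intro _ ℓ
    match ℓ with
    | 0 => rw [sum_plen_zero]; simp
    | (k+1) =>
      have hF : Fm n 0 = ∅ := by ext j; simp [mem_Fm]
      rw [hF]
      rw [Finset.powersetCard_eq_empty.mpr (by simp)]
      rw [Finset.sum_empty]
      symm
      refine Finset.sum_eq_zero fun σ _ => ?_
      rw [if_neg]
      rintro ⟨h1, h2⟩
      rw [Finset.subset_empty, Equiv.Perm.support_eq_empty_iff] at h1
      subst h1
      simp [plen_eq_zero_iff.mpr rfl] at h2
  | succ m ih =>
    intro hm ℓ
    have hmn : m < n := hm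
    have ihm := ih (le_of_lt hmn)
    set mi : Fin n := ⟨m, hmn⟩ with hmi
    match ℓ with
    | 0 => rw [sum_plen_zero]; simp
    | (k+1) =>
      have hmi_not : mi ∉ Fm n m := mi_not_mem_Fm hmn
      rw [Fm_succ hmn, Finset.powersetCard_succ_insert hmi_not]
      rw [Finset.sum_union (by
        rw [Finset.disjoint_left]
        rintro s hs ht
        rw [Finset.mem_powersetCard] at hs
        obtain ⟨t, ht', rfl⟩ := Finset.mem_image.mp ht
        exact hmi_not (hs.1 (Finset.mem_insert_self mi t)))]
      rw [Finset.sum_image (by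
        intro s hs t ht h
        rw [Finset.mem_coe, Finset.mem_powersetCard] at hs ht
        have hms : mi ∉ s := fun hh => hmi_not (hs.1 hh)
        have hmt : mi ∉ t := fun hh => hmi_not (ht.1 hh)
        have h2 := congrArg (fun u => Finset.erase u mi) h
        simpa [Finset.erase_insert hms, Finset.erase_insert hmt] using h2)]
      have hins : ∀ s ∈ (Fm n m).powersetCard k,
          (((insert mi s).sort (· ≤ ·)).map (JM n)).prod
          = ((s.sort (· ≤ ·)).map (JM n)).prod * JM n mi := by
        intro s hs
        rw [Finset.mem_powersetCard] at hs
        rw [sort_insert_max (fun b hb => le_of_lt (lt_mi_of_mem_Fm hmn (hs.1 hb)))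
            (fun hh => hmi_not (hs.1 hh))]
        simp
        rfl
      rw [Finset.sum_congr rfl hins, ← Finset.sum_mul, ihm (k+1), ihm k]
      symm
      have split : ∀ σ : Equiv.Perm (Fin n),
          (if σ.support ⊆ insert mi (Fm n m) ∧ plen σ = k+1 then of' σ else 0)
          = (if σ.support ⊆ Fm n m ∧ plen σ = k+1 then of' σ else 0)
            + (if σ.support ⊆ insert mi (Fm n m) ∧ plen σ = k+1 ∧ σ mi ≠ mi
                then of' σ else 0) := by
        intro σ
        by_cases h2 : σ mi = mi
        · have hms : mi ∉ σ.support := by simp [Equiv.Perm.mem_support, h2]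
          have hiff : (σ.support ⊆ insert mi (Fm n m)) ↔ (σ.support ⊆ Fm n m) := by
            constructor
            · intro h x hx
              rcases Finset.mem_insert.mp (h hx) with rfl | hh
              · exact absurd hx hms
              · exact hh
            · intro h
              exact h.trans (Finset.subset_insert _ _)
          simp [h2, hiff]
        · have hns : ¬ σ.support ⊆ Fm n m := by
            intro h
            exact h2 (Equiv.Perm.notMem_support.mp (fun hh => hmi_not (h hh)))
          simp [hns, h2]
      rw [Finset.sum_congr rfl (fun σ _ => split σ), Finset.sum_add_distrib]
      congr 1
      -- second part: the bijection
      rw [← Finset.sum_filter, ← Finset.sum_filter]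
      have hJM : JM n mi = ∑ j ∈ Finset.univ.filter (· < mi), of' (Equiv.swap j mi) := rfl
      rw [hJM, Finset.sum_mul_sum]
      simp only [← map_mul]
      rw [← Finset.sum_product']
      refine Finset.sum_bij'
        (i := fun σ _ => (σ * Equiv.swap (σ⁻¹ mi) mi, σ⁻¹ mi))
        (j := fun p _ => p.1 * Equiv.swap p.2 mi) ?_ ?_ ?_ ?_ ?_
      · -- i maps into the product set
        intro σ hσ
        rw [Finset.mem_filter] at hσ
        obtain ⟨-, hsub, hplen, hne⟩ := hσ
        have hσj : σ (σ⁻¹ mi) = mi := σ.apply_symm_apply mi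
        have hjne : σ⁻¹ mi ≠ mi := fun h => hne (by conv_lhs => rw [← h, hσj])
        have hjsupp : σ⁻¹ mi ∈ σ.support := by
          rw [Equiv.Perm.mem_support, hσj]; exact fun h => hjne h.symm
        have hjFm : σ⁻¹ mi ∈ Fm n m := by
          rcases Finset.mem_insert.mp (hsub hjsupp) with h | h
          · exact absurd h hjne
          · exact h
        have hjlt : σ⁻¹ mi < mi := lt_mi_of_mem_Fm hmn hjFm
        have hfix : (σ * Equiv.swap (σ⁻¹ mi) mi) mi = mi := by
          rw [Equiv.Perm.mul_apply, Equiv.swap_apply_right, hσj]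
        have hback : (σ * Equiv.swap (σ⁻¹ mi) mi) * Equiv.swap (σ⁻¹ mi) mi = σ := by
          rw [mul_assoc, Equiv.swap_mul_self, mul_one]
        have hsupp2 := support_mul_swap (σ := σ * Equiv.swap (σ⁻¹ mi) mi) hfix hjne
        rw [hback] at hsupp2
        have hplen2 := plen_mul_swap (σ := σ * Equiv.swap (σ⁻¹ mi) mi) hfix hjne
        rw [hback] at hplen2
        show (σ * Equiv.swap (σ⁻¹ mi) mi, σ⁻¹ mi) ∈ _
        rw [Finset.mem_product, Finset.mem_filter, Finset.mem_filter]
        refine ⟨⟨Finset.mem_univ _, ?_,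
          by show plen (σ * Equiv.swap (σ⁻¹ mi) mi) = k; omega⟩, Finset.mem_univ _, hjlt⟩
        · intro x hx
          have hxs : x ∈ σ.support := by
            rw [hsupp2]; exact Finset.mem_union_left _ hx
          have hxmi : x ≠ mi := fun h => by
            rw [h] at hx
            exact (Equiv.Perm.notMem_support.mpr hfix) hx
          rcases Finset.mem_insert.mp (hsub hxs) with h | h
          · exact absurd h hxmi
          · exact h
      · -- j maps into the filter set
        intro p hp
        rw [Finset.mem_product, Finset.mem_filter, Finset.mem_filter] at hp
        obtain ⟨⟨-, hsub, hplen⟩, -, hjlt⟩ := hp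
        have hjne : p.2 ≠ mi := ne_of_lt hjlt
        have hfix : p.1 mi = mi :=
          Equiv.Perm.notMem_support.mp (fun hh => hmi_not (hsub hh))
        have hsupp2 := support_mul_swap (σ := p.1) hfix hjne
        have hplen2 := plen_mul_swap (σ := p.1) hfix hjne
        show p.1 * Equiv.swap p.2 mi ∈ _
        rw [Finset.mem_filter]
        refine ⟨Finset.mem_univ _, ?_, by omega, ?_⟩
        · rw [hsupp2]
          intro x hx
          rcases Finset.mem_union.mp hx with h | h
          · exact Finset.mem_insert_of_mem (hsub h)
          · rcases Finset.mem_insert.mp h with rfl | h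
            · exact Finset.mem_insert_of_mem (mem_Fm.mpr hjlt)
            · rw [Finset.mem_singleton] at h
              subst h
              exact Finset.mem_insert_self _ _
        · rw [Equiv.Perm.mul_apply, Equiv.swap_apply_right]
          intro hh
          exact hjne (p.1.injective (hh.trans hfix.symm))
      · -- left inverse
        intro σ hσ
        show (σ * Equiv.swap (σ⁻¹ mi) mi) * Equiv.swap (σ⁻¹ mi) mi = σ
        rw [mul_assoc, Equiv.swap_mul_self, mul_one]
      · -- right inverse
        intro p hp
        rw [Finset.mem_product, Finset.mem_filter, Finset.mem_filter] at hp
        obtain ⟨⟨-, hsub, hplen⟩, -, hjlt⟩ := hp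
        have hfix : p.1 mi = mi :=
          Equiv.Perm.notMem_support.mp (fun hh => hmi_not (hsub hh))
        have hfixinv : p.1⁻¹ mi = mi := by
          rw [Equiv.Perm.inv_eq_iff_eq, hfix]
        have hg : (p.1 * Equiv.swap p.2 mi)⁻¹ mi = p.2 := by
          rw [mul_inv_rev, Equiv.Perm.mul_apply, Equiv.swap_inv, hfixinv,
            Equiv.swap_apply_right]
        show ((p.1 * Equiv.swap p.2 mi) * Equiv.swap ((p.1 * Equiv.swap p.2 mi)⁻¹ mi) mi,
          (p.1 * Equiv.swap p.2 mi)⁻¹ mi) = p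
        rw [hg, mul_assoc, Equiv.swap_mul_self, mul_one]
      · -- values agree
        intro σ hσ
        rw [mul_assoc, Equiv.swap_mul_self, mul_one]
end Main

section Final
variable {n : ℕ}

lemma kappa_plen (σ : Equiv.Perm (Fin n)) :
    kappa σ = n - plen σ ∧ plen σ ≤ n := by
  have hsupp : σ.support = Finset.univ.filter (fun x => ¬ σ x = x) := rfl
  have hsplit := Finset.card_filter_add_card_filter_not
    (s := (Finset.univ : Finset (Fin n))) (p := fun x => σ x = x)
  rw [← hsupp, Finset.card_univ, Fintype.card_fin] at hsplit
  have hct := card_cycleType_le σ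
  have hsn : σ.support.card ≤ n := by
    have h := Finset.card_le_univ σ.support
    simpa using h
  unfold kappa plen
  constructor <;> omega

/-- `e_ℓ(X_1,…,X_n) = Σ_{σ ∈ S_n, κ(σ)=n-ℓ} σ` in `ℚ[S_n]`. -/
theorem eJM_eq (n ℓ : ℕ) (hl : ℓ ≤ n) :
    eJM n ℓ = ∑ σ : Equiv.Perm (Fin n),
      if kappa σ = n - ℓ then MonoidAlgebra.of ℚ (Equiv.Perm (Fin n)) σ else 0 := by
  have h := main_induction (n := n) n le_rfl ℓ
  rw [Fm_self] at h
  unfold eJM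
  rw [h]
  refine Finset.sum_congr rfl fun σ _ => ?_
  obtain ⟨h1, h2⟩ := kappa_plen σ
  refine if_congr ?_ rfl rfl
  constructor
  · rintro ⟨-, rfl⟩
    omega
  · intro hk
    exact ⟨Finset.subset_univ _, by omega⟩
end Final
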